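/- Let a₀ > 0, c₀ ∈ ℝ, and m(p) = 1/(e^{a₀|p|²+c₀}+1). Then ∫_{ℝ³} |p|⁴ (m − m²) dp = (5/(2a₀)) · ∫_{ℝ³} |p|² m dp. -/

import Mathlib

open Real MeasureTheory Set Filter

theorem stmt_18 (a₀ : ℝ) (ha : 0 < a₀) (c₀ : ℝ)
    (m : EuclideanSpace ℝ (Fin 3) → ℝ)
    (hm : ∀ p, m p = 1 / (exp (a₀ * ‖p‖ ^ 2 + c₀) + 1)) :
    ∫ p : EuclideanSpace ℝ (Fin 3), ‖p‖ ^ 4 * (m p - m p ^ 2) =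
      (5 / (2 * a₀)) * ∫ p : EuclideanSpace ℝ (Fin 3), ‖p‖ ^ 2 * m p := by
  set M : ℝ → ℝ := fun r => 1 / (exp (a₀ * r ^ 2 + c₀) + 1) with hM
  have hMpos : ∀ r, 0 < M r := fun r => by positivity
  have hMle : ∀ r, M r ≤ exp (-(a₀ * r ^ 2 + c₀)) := fun r => by
    rw [hM, exp_neg, inv_eq_one_div]
    exact one_div_le_one_div_of_le (exp_pos _) (by linarith)
  have hMle1 : ∀ r, M r ≤ 1 := fun r => by
    rw [hM]
    have := exp_pos (a₀ * r ^ 2 + c₀)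
    rw [div_le_one (by linarith)]; linarith
  have hMM : ∀ r, 0 ≤ M r - M r ^ 2 ∧ M r - M r ^ 2 ≤ M r := fun r =>
    ⟨by nlinarith [hMpos r, hMle1 r], by nlinarith [hMpos r, hMle1 r]⟩
  have key : ∀ k : ℕ, IntegrableOn (fun r : ℝ => r ^ k * exp (-(a₀ * r ^ 2 + c₀))) (Ioi 0) := by
    intro k
    have h2 : IntegrableOn (fun x : ℝ => exp (-c₀) * (x ^ ((k:ℝ)) * exp (-a₀ * x ^ 2)))
        (Ioi 0) :=
      (integrableOn_rpow_mul_exp_neg_mul_sq ha (s := (k : ℝ))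
        (by have : (0:ℝ) ≤ (k:ℝ) := Nat.cast_nonneg k; linarith)).const_mul _
    apply h2.congr_fun ?_ measurableSet_Ioi
    intro x hx
    show exp (-c₀) * (x ^ ((k:ℝ)) * exp (-a₀ * x ^ 2)) = x ^ k * exp (-(a₀ * x ^ 2 + c₀))
    rw [Real.rpow_natCast, show -(a₀ * x ^ 2 + c₀) = -c₀ + (-a₀ * x ^ 2) by ring, exp_add]
    ring
  have meas : ∀ k : ℕ, Measurable fun r : ℝ => r ^ k * M r := by
    intro k; rw [hM]; fun_prop
  have hI2 : IntegrableOn (fun r : ℝ => r ^ 4 * M r) (Ioi 0) := by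
    apply (key 4).mono' (meas 4).aestronglyMeasurable
    filter_upwards [ae_restrict_mem measurableSet_Ioi] with x hx
    have hx0 : (0:ℝ) < x := hx
    rw [Real.norm_eq_abs, abs_of_nonneg (mul_nonneg (by positivity) (hMpos x).le)]
    exact mul_le_mul_of_nonneg_left (hMle x) (by positivity)
  have hI1 : IntegrableOn (fun r : ℝ => r ^ 6 * (M r - M r ^ 2)) (Ioi 0) := by
    apply (key 6).mono' ?_ ?_
    · apply Measurable.aestronglyMeasurable; rw [hM]; fun_prop
    · filter_upwards [ae_restrict_mem measurableSet_Ioi] with x hx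
      have hx0 : (0:ℝ) < x := hx
      rw [Real.norm_eq_abs, abs_of_nonneg (mul_nonneg (by positivity) (hMM x).1)]
      calc x ^ 6 * (M x - M x ^ 2)
          ≤ x ^ 6 * M x := mul_le_mul_of_nonneg_left (hMM x).2 (by positivity)
        _ ≤ _ := mul_le_mul_of_nonneg_left (hMle x) (by positivity)
  have hderiv : ∀ r : ℝ, HasDerivAt (fun r => r ^ 5 * M r)
      (5 * (r ^ 4 * M r) - 2 * a₀ * (r ^ 6 * (M r - M r ^ 2))) r := by
    intro r
    have hu : HasDerivAt (fun r : ℝ => a₀ * r ^ 2 + c₀) (a₀ * (2 * r)) r := by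
      simpa using (((hasDerivAt_pow 2 r)).const_mul a₀).add_const c₀
    have he : HasDerivAt (fun r : ℝ => exp (a₀ * r ^ 2 + c₀) + 1)
        (exp (a₀ * r ^ 2 + c₀) * (a₀ * (2 * r))) r := (hu.exp).add_const 1
    have hne : exp (a₀ * r ^ 2 + c₀) + 1 ≠ 0 := by positivity
    have hMd : HasDerivAt M
        (-(exp (a₀ * r ^ 2 + c₀) * (a₀ * (2 * r))) / (exp (a₀ * r ^ 2 + c₀) + 1) ^ 2) r := by
      simpa [hM, one_div] using (he.fun_inv hne)
    have hmul := (hasDerivAt_pow 5 r).fun_mul hMd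
    refine hmul.congr_deriv ?_
    have hE := exp_pos (a₀ * r ^ 2 + c₀)
    rw [hM]
    field_simp
    ring
  have htend : Tendsto (fun r : ℝ => r ^ 5 * M r) atTop (nhds 0) := by
    refine squeeze_zero' (g := fun x => exp (-c₀) * (|x| ^ (5:ℝ) * exp (-a₀ * x ^ 2))) ?_ ?_ ?_
    · filter_upwards [eventually_ge_atTop (0:ℝ)] with x hx
      exact mul_nonneg (by positivity) (hMpos x).le
    · filter_upwards [eventually_ge_atTop (0:ℝ)] with x hx
      calc x ^ 5 * M x
          ≤ x ^ 5 * exp (-(a₀ * x ^ 2 + c₀)) :=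
            mul_le_mul_of_nonneg_left (hMle x) (by positivity)
        _ = exp (-c₀) * (|x| ^ (5:ℝ) * exp (-a₀ * x ^ 2)) := by
            rw [abs_of_nonneg hx, show ((5:ℝ)) = ((5:ℕ):ℝ) by norm_num, Real.rpow_natCast,
              show -(a₀ * x ^ 2 + c₀) = -c₀ + (-a₀ * x ^ 2) by ring, exp_add]
            ring
    · have h5 := (tendsto_rpow_abs_mul_exp_neg_mul_sq_cocompact ha 5).mono_left
        (cocompact_eq_atBot_atTop (α := ℝ) ▸ le_sup_right)
      simpa using tendsto_const_nhds.mul h5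
  have hFTC : ∫ r in Ioi (0:ℝ), (5 * (r ^ 4 * M r) - 2 * a₀ * (r ^ 6 * (M r - M r ^ 2)))
      = 0 - (0 ^ 5 * M 0) := by
    apply integral_Ioi_of_hasDerivAt_of_tendsto
      (hderiv 0).continuousAt.continuousWithinAt (fun x _ => hderiv x) ?_ htend
    exact ((hI2.const_mul 5).sub (hI1.const_mul (2 * a₀)))
  rw [zero_pow (by norm_num), zero_mul, sub_zero] at hFTC
  rw [integral_sub (hI2.const_mul 5) (hI1.const_mul (2 * a₀)),
    integral_const_mul, integral_const_mul, sub_eq_zero] at hFTC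
  have key1D : ∫ r in Ioi (0:ℝ), r ^ 6 * (M r - M r ^ 2)
      = (5 / (2 * a₀)) * ∫ r in Ioi (0:ℝ), r ^ 4 * M r := by
    rw [div_mul_eq_mul_div, eq_div_iff (by positivity)]
    linarith [hFTC]
  have hL : ∫ p : EuclideanSpace ℝ (Fin 3), ‖p‖ ^ 4 * (m p - m p ^ 2) =
      3 • ((volume (Metric.ball (0:EuclideanSpace ℝ (Fin 3)) 1)).toReal •
        ∫ y in Ioi (0:ℝ), y ^ 2 • (y ^ 4 * (M y - M y ^ 2))) := by
    rw [show (fun p : EuclideanSpace ℝ (Fin 3) => ‖p‖ ^ 4 * (m p - m p ^ 2))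
        = fun p => (fun r : ℝ => r ^ 4 * (M r - M r ^ 2)) ‖p‖ by
      funext p; simp only [hm p, hM]]
    simpa [Measure.real] using MeasureTheory.integral_fun_norm_addHaar
      (volume : Measure (EuclideanSpace ℝ (Fin 3))) (fun r : ℝ => r ^ 4 * (M r - M r ^ 2))
  have hR : ∫ p : EuclideanSpace ℝ (Fin 3), ‖p‖ ^ 2 * m p =
      3 • ((volume (Metric.ball (0:EuclideanSpace ℝ (Fin 3)) 1)).toReal •
        ∫ y in Ioi (0:ℝ), y ^ 2 • (y ^ 2 * M y)) := by
    rw [show (fun p : EuclideanSpace ℝ (Fin 3) => ‖p‖ ^ 2 * m p)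
        = fun p => (fun r : ℝ => r ^ 2 * M r) ‖p‖ by
      funext p; simp only [hm p, hM]]
    simpa [Measure.real] using MeasureTheory.integral_fun_norm_addHaar
      (volume : Measure (EuclideanSpace ℝ (Fin 3))) (fun r : ℝ => r ^ 2 * M r)
  rw [hL, hR]
  simp only [smul_eq_mul, nsmul_eq_mul]
  have e1 : ∀ y : ℝ, y ^ 2 * (y ^ 4 * (M y - M y ^ 2)) = y ^ 6 * (M y - M y ^ 2) := fun y => by
    ring
  have e2 : ∀ y : ℝ, y ^ 2 * (y ^ 2 * M y) = y ^ 4 * M y := fun y => by ring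
  simp only [e1, e2, key1D]
  ring
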